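/- Let G=(V,E,w) be a finite graph with positive real edge weights, M a matching, and y:V→ℝ_{≥0}, z:𝒱_odd→ℝ_{≥0} duals. Let δ>0, ε̂≥0, φ≥0, and let f be the number of vertices free with respect to M. Assume: (full blossoms) for every B∈𝒱_odd with z(B)>0, M contains exactly (|B|−1)/2 edges with both endpoints in B; (near domination) yz(e) ≥ w_δ(e) − δ for every e∈E, where w_δ(e)=δ·⌊w(e)/δ⌋; (near tightness) yz(e) − w(e) ≤ ε̂·w(e) for every e∈M; and (free vertex duals) y(u)=φ for every free vertex u. Then for any maximum weight matching M* of G: w(M) ≥ (1+ε̂)^{−1}·(w(M*) − 2δ·|M*| − f·φ). -/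

import Mathlib

open scoped Classical


noncomputable def eFin {V : Type*} [DecidableEq V] (e : Sym2 V) : Finset V :=
  Sym2.lift ⟨fun u v => ({u, v} : Finset V), fun u v => Finset.pair_comm u v⟩ e

lemma eFin_mk {V : Type*} [DecidableEq V] (u v : V) : eFin s(u, v) = {u, v} := rfl

lemma eFin_mem {V : Type*} [DecidableEq V] (e : Sym2 V) (x : V) :
    x ∈ eFin e ↔ x ∈ e := by
  induction e using Sym2.ind with
  | _ u v => simp [eFin_mk, Sym2.mem_iff]

lemma eFin_card {V : Type*} [DecidableEq V] (e : Sym2 V) (h : ¬ e.IsDiag) :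
    (eFin e).card = 2 := by
  induction e using Sym2.ind with
  | _ u v =>
    rw [Sym2.mk_isDiag_iff] at h
    rw [eFin_mk]
    exact Finset.card_pair h

lemma matching_pd {V : Type*} [DecidableEq V] {M : Finset (Sym2 V)}
    (hdisj : ∀ e₁ ∈ M, ∀ e₂ ∈ M, ∀ v : V, v ∈ e₁ → v ∈ e₂ → e₁ = e₂) :
    (M : Set (Sym2 V)).PairwiseDisjoint eFin := by
  intro e₁ h1 e₂ h2 hne
  simp only [Function.onFun]
  rw [Finset.disjoint_left]
  intro v hv1 hv2
  exact hne (hdisj e₁ h1 e₂ h2 v ((eFin_mem _ _).1 hv1) ((eFin_mem _ _).1 hv2))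

lemma sum_y_biUnion {V : Type*} [DecidableEq V] {M : Finset (Sym2 V)}
    (hdiag : ∀ e ∈ M, ¬ e.IsDiag)
    (hdisj : ∀ e₁ ∈ M, ∀ e₂ ∈ M, ∀ v : V, v ∈ e₁ → v ∈ e₂ → e₁ = e₂)
    (y : V → ℝ) :
    ∑ v ∈ M.biUnion eFin, y v
      = ∑ e ∈ M, Sym2.lift ⟨fun u v => y u + y v, fun _ _ => add_comm _ _⟩ e := by
  rw [Finset.sum_biUnion (matching_pd hdisj)]
  refine Finset.sum_congr rfl fun e he => ?_
  have hd := hdiag e he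
  induction e using Sym2.ind with
  | _ u v =>
    rw [Sym2.mk_isDiag_iff] at hd
    rw [eFin_mk, Finset.sum_pair hd, Sym2.lift_mk]

lemma matching_count_in_blossom {V : Type*} [Fintype V] [DecidableEq V] {M : Finset (Sym2 V)}
    (hdiag : ∀ e ∈ M, ¬ e.IsDiag)
    (hdisj : ∀ e₁ ∈ M, ∀ e₂ ∈ M, ∀ v : V, v ∈ e₁ → v ∈ e₂ → e₁ = e₂)
    (B : Finset V) (hB : Odd B.card) :
    2 * (M.filter (fun e => ∀ v ∈ e, v ∈ B)).card + 1 ≤ B.card := by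
  set F := M.filter (fun e => ∀ v ∈ e, v ∈ B) with hF
  have hsub : F.biUnion eFin ⊆ B := by
    intro v hv
    obtain ⟨e, heF, hve⟩ := Finset.mem_biUnion.1 hv
    exact (Finset.mem_filter.1 heF).2 v ((eFin_mem _ _).1 hve)
  have hcard : (F.biUnion eFin).card = 2 * F.card := by
    rw [Finset.card_biUnion]
    · rw [Finset.sum_congr rfl fun e he => eFin_card e (hdiag e (Finset.mem_filter.1 he).1)]
      simp [mul_comm]
      rfl
    · intro e₁ h1 e₂ h2 hne
      exact matching_pd hdisj (Finset.mem_coe.2 (Finset.mem_filter.1 h1).1)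
        (Finset.mem_coe.2 (Finset.mem_filter.1 h2).1) hne
  obtain ⟨k, hk⟩ := hB
  have h1 : 2 * F.card ≤ B.card := hcard ▸ Finset.card_le_card hsub
  omega

lemma zl_swap {V : Type*} [Fintype V] [DecidableEq V] (M' : Finset (Sym2 V))
    (z : Finset V → ℝ) :
    ∑ e ∈ M', ∑ B ∈ Finset.univ.filter (fun B : Finset V => Odd B.card ∧ ∀ x ∈ e, x ∈ B), z B
      = ∑ B ∈ Finset.univ.filter (fun B : Finset V => Odd B.card),
          z B * (M'.filter (fun e => ∀ v ∈ e, v ∈ B)).card := by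
  simp only [Finset.sum_filter]
  rw [Finset.sum_comm]
  refine Finset.sum_congr rfl fun B _ => ?_
  by_cases hB : Odd B.card
  · simp only [hB, true_and, if_true]
    rw [← Finset.sum_filter, Finset.sum_const]
    simp [mul_comm, nsmul_eq_mul]
  · simp [hB]

/-- A matching in the graph with edge set `E`: a subset of the edges, containing
no self-loops, in which distinct edges share no vertex. -/
def IsMatching {V : Type*} [Fintype V] [DecidableEq V]
    (E M : Finset (Sym2 V)) : Prop :=
  M ⊆ E ∧ (∀ e ∈ M, ¬ e.IsDiag) ∧
    ∀ e₁ ∈ M, ∀ e₂ ∈ M, ∀ v : V, v ∈ e₁ → v ∈ e₂ → e₁ = e₂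

theorem stmt4 {V : Type*} [Fintype V] [DecidableEq V]
    (E : Finset (Sym2 V)) (w : Sym2 V → ℝ)
    (hw : ∀ e ∈ E, 0 < w e)
    (M : Finset (Sym2 V)) (hM : IsMatching E M)
    (y : V → ℝ) (z : Finset V → ℝ)
    (hy : ∀ u : V, 0 ≤ y u)
    (hz : ∀ B : Finset V, Odd B.card → 0 ≤ z B)
    (δ : ℝ) (hδ : 0 < δ)
    (εhat : ℝ) (hεhat : 0 ≤ εhat)
    (φ : ℝ) (hφ : 0 ≤ φ)
    (f : ℕ) (hf : f = (Finset.univ.filter (fun v : V => ∀ e ∈ M, v ∉ e)).card)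
    (hfull : ∀ B : Finset V, Odd B.card → 0 < z B →
      2 * (M.filter (fun e => ∀ v ∈ e, v ∈ B)).card = B.card - 1)
    (hdom : ∀ u v : V, s(u, v) ∈ E →
      δ * (⌊w s(u, v) / δ⌋ : ℝ) - δ ≤ y u + y v +
        ∑ B ∈ Finset.univ.filter (fun B : Finset V => Odd B.card ∧ u ∈ B ∧ v ∈ B), z B)
    (htight : ∀ u v : V, s(u, v) ∈ M →
      (y u + y v +
        ∑ B ∈ Finset.univ.filter (fun B : Finset V => Odd B.card ∧ u ∈ B ∧ v ∈ B), z B)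
        - w s(u, v) ≤ εhat * w s(u, v))
    (hfree : ∀ v : V, (∀ e ∈ M, v ∉ e) → y v = φ)
    (Mstar : Finset (Sym2 V)) (hMstar : IsMatching E Mstar)
    (hmax : ∀ M' : Finset (Sym2 V), IsMatching E M' →
      ∑ e ∈ M', w e ≤ ∑ e ∈ Mstar, w e) :
    (1 + εhat)⁻¹ * ((∑ e ∈ Mstar, w e) - 2 * δ * Mstar.card - f * φ) ≤ ∑ e ∈ M, w e := by
  obtain ⟨hME, hMdiag, hMdisj⟩ := hM
  obtain ⟨hSE, hSdiag, hSdisj⟩ := hMstar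
  set Yl : Sym2 V → ℝ := Sym2.lift ⟨fun u v => y u + y v, fun _ _ => add_comm _ _⟩ with hYl
  set Zl : Sym2 V → ℝ := fun e =>
    ∑ B ∈ Finset.univ.filter (fun B : Finset V => Odd B.card ∧ ∀ x ∈ e, x ∈ B), z B with hZl
  have hZmk : ∀ u v : V, Zl s(u, v) =
      ∑ B ∈ Finset.univ.filter (fun B : Finset V => Odd B.card ∧ u ∈ B ∧ v ∈ B), z B := by
    intro u v
    rw [hZl]
    refine Finset.sum_congr (Finset.filter_congr fun B _ => ?_) (fun _ _ => rfl)
    constructor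
    · rintro ⟨h1, h2⟩
      exact ⟨h1, h2 u (Sym2.mem_mk_left u v), h2 v (Sym2.mem_mk_right u v)⟩
    · rintro ⟨h1, h2, h3⟩
      refine ⟨h1, fun x hx => ?_⟩
      rcases Sym2.mem_iff.1 hx with rfl | rfl
      · exact h2
      · exact h3
  have hYmk : ∀ u v : V, Yl s(u, v) = y u + y v := by
    intro u v; rw [hYl, Sym2.lift_mk]
  have h1 : ∀ e ∈ Mstar, w e ≤ Yl e + Zl e + 2 * δ := by
    intro e he
    have heE := hSE he
    induction e using Sym2.ind with
    | _ u v =>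
      have hd := hdom u v heE
      have hfl : w s(u, v) / δ - 1 < (⌊w s(u, v) / δ⌋ : ℝ) := Int.sub_one_lt_floor _
      have hmul := mul_lt_mul_of_pos_right hfl hδ
      have hdc : w s(u, v) / δ * δ = w s(u, v) := div_mul_cancel₀ _ (ne_of_gt hδ)
      rw [hZmk u v, hYmk u v]
      nlinarith [hmul, hdc, hd]
  have hs1 : ∑ e ∈ Mstar, w e
      ≤ (∑ e ∈ Mstar, Yl e) + (∑ e ∈ Mstar, Zl e) + 2 * δ * Mstar.card := by
    calc ∑ e ∈ Mstar, w e ≤ ∑ e ∈ Mstar, (Yl e + Zl e + 2 * δ) := Finset.sum_le_sum h1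
      _ = (∑ e ∈ Mstar, Yl e) + (∑ e ∈ Mstar, Zl e) + 2 * δ * Mstar.card := by
          rw [Finset.sum_add_distrib, Finset.sum_add_distrib, Finset.sum_const, nsmul_eq_mul]
          ring
  have hYstar : ∑ e ∈ Mstar, Yl e ≤ ∑ v, y v := by
    rw [hYl, ← sum_y_biUnion hSdiag hSdisj y]
    exact Finset.sum_le_sum_of_subset_of_nonneg (Finset.subset_univ _) (fun v _ _ => hy v)
  have hV : ∑ v, y v = f * φ + ∑ e ∈ M, Yl e := by
    have hsplit := Finset.sum_filter_add_sum_filter_not Finset.univ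
      (fun v : V => ∀ e ∈ M, v ∉ e) y
    have hfreeSum : ∑ v ∈ Finset.univ.filter (fun v : V => ∀ e ∈ M, v ∉ e), y v
        = f * φ := by
      rw [Finset.sum_congr rfl (fun v hv => hfree v (Finset.mem_filter.1 hv).2),
        Finset.sum_const, nsmul_eq_mul, hf]
    have hcov : Finset.univ.filter (fun v : V => ¬ ∀ e ∈ M, v ∉ e) = M.biUnion eFin := by
      ext v
      simp only [Finset.mem_filter, Finset.mem_univ, true_and, Finset.mem_biUnion, eFin_mem]
      push_neg
      rfl
    rw [← hsplit, hfreeSum, hcov, sum_y_biUnion hMdiag hMdisj y, hYl]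
  have hZstar : ∑ e ∈ Mstar, Zl e ≤ ∑ e ∈ M, Zl e := by
    simp only [hZl]
    rw [zl_swap, zl_swap]
    refine Finset.sum_le_sum fun B hB => ?_
    have hBodd : Odd B.card := (Finset.mem_filter.1 hB).2
    rcases eq_or_lt_of_le (hz B hBodd) with h0 | hpos
    · simp [← h0]
    · have hfB := hfull B hBodd hpos
      have hle := matching_count_in_blossom hSdiag hSdisj B hBodd
      have hc : (Mstar.filter (fun e => ∀ v ∈ e, v ∈ B)).card
          ≤ (M.filter (fun e => ∀ v ∈ e, v ∈ B)).card := by omega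
      exact mul_le_mul_of_nonneg_left (by exact_mod_cast hc) (le_of_lt hpos)
  have hMle : ∑ e ∈ M, (Yl e + Zl e) ≤ (1 + εhat) * ∑ e ∈ M, w e := by
    rw [Finset.mul_sum]
    refine Finset.sum_le_sum fun e he => ?_
    induction e using Sym2.ind with
    | _ u v =>
      have ht := htight u v he
      rw [hZmk u v, hYmk u v]
      linarith
  have hsum2 : ∑ e ∈ M, (Yl e + Zl e) = (∑ e ∈ M, Yl e) + ∑ e ∈ M, Zl e :=
    Finset.sum_add_distrib
  have hpos : (0:ℝ) < 1 + εhat := by linarith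
  rw [inv_mul_le_iff₀ hpos]
  linarith
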